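/- Let Φ : ℝ≥0 → ℝ≥0 and α : ℝ≥0 → ℝ⁺ be continuous, and suppose there exist constants C₁, C₂ > 0 and β ∈ (0,1) such that for all integers k ≥ 0 and all t ∈ [kC₁, (k+1)C₁]: (i) Φ(t) ≤ Φ(kC₁) + C₂∫_{kC₁}^{(k+1)C₁} α(s)ds and (ii) Φ((k+1)C₁) ≤ β·Φ(kC₁) + C₂∫_{kC₁}^{(k+1)C₁} α(s)ds. If α is bounded and ∫₀^∞ α²(t)dt < ∞, then ∫₀^∞ α(t)Φ(t)dt < ∞. -/

import Mathlib

open Real Filter MeasureTheory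

/-- Cauchy–Schwarz for interval integrals of continuous functions. -/
lemma cs_interval (f : ℝ → ℝ) (c d : ℝ) (h : c ≤ d) (hf : Continuous f) :
    (∫ s in c..d, f s) ^ 2 ≤ (d - c) * ∫ s in c..d, (f s) ^ 2 := by
  set a := ∫ s in c..d, f s with ha
  have h0 : 0 ≤ ∫ s in c..d, ((d - c) * f s - a) ^ 2 :=
    intervalIntegral.integral_nonneg h (fun x _ => sq_nonneg _)
  have hexp : (∫ s in c..d, ((d - c) * f s - a) ^ 2)
      = (d - c) ^ 2 * (∫ s in c..d, (f s) ^ 2) - (d - c) * a ^ 2 := by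
    have hpt : ∀ s : ℝ, ((d - c) * f s - a) ^ 2
        = (d - c) ^ 2 * (f s) ^ 2 - (2 * (d - c) * a) * f s + a ^ 2 := by
      intro s; ring
    simp_rw [hpt]
    rw [intervalIntegral.integral_add (f := fun s => (d - c) ^ 2 * f s ^ 2 - 2 * (d - c) * a * f s)
        (((continuous_const.mul (hf.pow 2)).sub
        (continuous_const.mul hf)).intervalIntegrable _ _) intervalIntegrable_const,
      intervalIntegral.integral_sub (f := fun s => (d - c) ^ 2 * f s ^ 2)
        (g := fun s => 2 * (d - c) * a * f s)
        ((continuous_const.mul (hf.pow 2)).intervalIntegrable _ _)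
        ((continuous_const.mul hf).intervalIntegrable _ _),
      intervalIntegral.integral_const_mul, intervalIntegral.integral_const_mul,
      intervalIntegral.integral_const, ← ha, smul_eq_mul]
    ring
  rw [hexp] at h0
  rcases eq_or_lt_of_le h with rfl | hlt
  · have ha0 : a = 0 := by rw [ha, intervalIntegral.integral_same]
    simp [ha0]
  · nlinarith [sq_nonneg a]

/-- Summability of the weighted disagreement: if `Φ` satisfies the two
recursive contraction inequalities and `α` is bounded and square integrable,
then `∫₀^∞ α Φ < ∞`. -/
theorem weighted_disagreement_integrable
    (Φ α : ℝ → ℝ)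
    (hΦcont : Continuous Φ) (hΦnonneg : ∀ t ≥ (0:ℝ), 0 ≤ Φ t)
    (hαcont : Continuous α) (hαpos : ∀ t ≥ (0:ℝ), 0 < α t)
    (C₁ C₂ β : ℝ) (hC₁ : 0 < C₁) (hC₂ : 0 < C₂) (hβ : β ∈ Set.Ioo (0:ℝ) 1)
    (hrec1 : ∀ k : ℕ, ∀ t ∈ Set.Icc ((k:ℝ) * C₁) (((k:ℝ) + 1) * C₁),
      Φ t ≤ Φ ((k:ℝ) * C₁) + C₂ * ∫ s in ((k:ℝ) * C₁)..(((k:ℝ) + 1) * C₁), α s)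
    (hrec2 : ∀ k : ℕ,
      Φ (((k:ℝ) + 1) * C₁) ≤ β * Φ ((k:ℝ) * C₁) +
        C₂ * ∫ s in ((k:ℝ) * C₁)..(((k:ℝ) + 1) * C₁), α s)
    (hαbdd : ∃ A : ℝ, ∀ t ≥ (0:ℝ), α t ≤ A)
    (hα2int : IntegrableOn (fun t => (α t) ^ 2) (Set.Ici (0:ℝ))) :
    IntegrableOn (fun t => α t * Φ t) (Set.Ici (0:ℝ)) := by
  obtain ⟨hβ0, hβ1⟩ := hβ
  -- grid points
  set g : ℕ → ℝ := fun k => (k : ℝ) * C₁ with hg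
  have hg0 : ∀ k : ℕ, 0 ≤ g k := fun k =>
    mul_nonneg (Nat.cast_nonneg k) hC₁.le
  have hgmono : ∀ k : ℕ, g k ≤ g (k + 1) := by
    intro k
    have : (k : ℝ) ≤ (k : ℝ) + 1 := by linarith
    simpa [hg, Nat.cast_succ] using mul_le_mul_of_nonneg_right this hC₁.le
  have hgsucc : ∀ k : ℕ, g (k + 1) = ((k : ℝ) + 1) * C₁ := by
    intro k; simp [hg, Nat.cast_succ]
  -- abbreviations
  set a : ℕ → ℝ := fun k => ∫ s in g k..g (k + 1), α s with haa
  set p : ℕ → ℝ := fun k => Φ (g k) with hpp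
  have ha_nonneg : ∀ k, 0 ≤ a k := by
    intro k
    exact intervalIntegral.integral_nonneg (hgmono k)
      (fun u hu => (hαpos u (le_trans (hg0 k) hu.1)).le)
  have hp_nonneg : ∀ k, 0 ≤ p k := fun k => hΦnonneg _ (hg0 k)
  -- square integral bound
  set B : ℝ := ∫ t in Set.Ici (0:ℝ), (α t) ^ 2 with hB
  have hSn : ∀ n : ℕ, ∑ k ∈ Finset.range n, ∫ s in g k..g (k + 1), (α s) ^ 2
      = ∫ s in (g 0)..(g n), (α s) ^ 2 := by
    intro n
    exact intervalIntegral.sum_integral_adjacent_intervals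
      (fun k _ => (hαcont.pow 2).intervalIntegrable _ _)
  have hIB : ∀ n : ℕ, (∫ s in (g 0)..(g n), (α s) ^ 2) ≤ B := by
    intro n
    rw [intervalIntegral.integral_of_le (le_trans (by simp [hg]) (hg0 n))]
    have h0 : g 0 = 0 := by simp [hg]
    rw [h0]
    refine setIntegral_mono_set hα2int ?_ ?_
    · exact Filter.Eventually.of_forall fun x => sq_nonneg _
    · exact Filter.Eventually.of_forall fun x hx => le_of_lt hx.1
  have hsum_a2 : ∀ n : ℕ, ∑ k ∈ Finset.range n, (a k) ^ 2 ≤ C₁ * B := by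
    intro n
    have h1 : ∀ k, (a k) ^ 2 ≤ C₁ * ∫ s in g k..g (k + 1), (α s) ^ 2 := by
      intro k
      have := cs_interval α (g k) (g (k + 1)) (hgmono k) hαcont
      have hdc : g (k + 1) - g k = C₁ := by
        rw [hgsucc k]; simp [hg]; ring
      rwa [hdc] at this
    calc ∑ k ∈ Finset.range n, (a k) ^ 2
        ≤ ∑ k ∈ Finset.range n, C₁ * ∫ s in g k..g (k + 1), (α s) ^ 2 :=
          Finset.sum_le_sum fun k _ => h1 k
      _ = C₁ * ∫ s in (g 0)..(g n), (α s) ^ 2 := by rw [← Finset.mul_sum, hSn n]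
      _ ≤ C₁ * B := mul_le_mul_of_nonneg_left (hIB n) hC₁.le
  have hB_nonneg : 0 ≤ C₁ * B := by
    have h := hsum_a2 1
    rw [Finset.sum_range_one] at h
    nlinarith [sq_nonneg (a 0)]
  -- quadratic recursion
  set γ : ℝ := β * (1 + β) / 2 with hγ
  have hγ1 : γ < 1 := by nlinarith
  have hγ0 : 0 < γ := by nlinarith
  set K : ℝ := (1 + β) / (1 - β) * C₂ ^ 2 with hK
  have hK0 : 0 < K := by
    apply mul_pos (div_pos (by linarith) (by linarith)) (by positivity)
  have hrecq : ∀ k : ℕ, p (k + 1) ^ 2 ≤ γ * p k ^ 2 + K * a k ^ 2 := by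
    intro k
    have h2 : p (k + 1) ≤ β * p k + C₂ * a k := by
      have := hrec2 k
      rw [← hgsucc k] at this
      simpa [hpp, haa, hg, hgsucc] using this
    have hps : p (k + 1) ^ 2 ≤ (β * p k + C₂ * a k) ^ 2 := by
      have h3 : 0 ≤ p (k + 1) := hp_nonneg (k + 1)
      nlinarith
    -- (x+y)^2 ≤ (1+ε) x^2 + (1+1/ε) y^2 with ε = (1-β)/(2β)
    have key : (β * p k + C₂ * a k) ^ 2 ≤ γ * p k ^ 2 + K * a k ^ 2 := by
      have hεy : 2 * (β * p k) * (C₂ * a k)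
          ≤ (1 - β) / (2 * β) * (β * p k) ^ 2 + 2 * β / (1 - β) * (C₂ * a k) ^ 2 := by
        have hb1 : (0:ℝ) < 2 * β := by linarith
        have hb2 : (0:ℝ) < 1 - β := by linarith
        rw [← sub_nonneg]
        have key : (1 - β) / (2 * β) * (β * p k) ^ 2 + 2 * β / (1 - β) * (C₂ * a k) ^ 2
            - 2 * (β * p k) * (C₂ * a k)
            = ((1 - β) * (β * p k) - 2 * β * (C₂ * a k)) ^ 2 / (2 * β * (1 - β)) := by
          field_simp
          ring
        rw [key]
        positivity
      have e1 : γ * p k ^ 2 = (β * p k) ^ 2 + (1 - β) / (2 * β) * (β * p k) ^ 2 := by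
        field_simp [hγ]; ring
      have e2 : K * a k ^ 2 = (C₂ * a k) ^ 2 + 2 * β / (1 - β) * (C₂ * a k) ^ 2 := by
        have hb2 : (1 - β) ≠ 0 := by linarith
        rw [hK]; field_simp; ring
      nlinarith
    linarith
  -- bounded partial sums of p^2
  set S : ℝ := (p 0 ^ 2 + K * (C₁ * B)) / (1 - γ) with hS
  have hPsum : ∀ n : ℕ, ∑ k ∈ Finset.range n, p k ^ 2 ≤ S := by
    intro n
    have hmono : ∑ k ∈ Finset.range n, p k ^ 2 ≤ ∑ k ∈ Finset.range (n + 1), p k ^ 2 := by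
      rw [Finset.sum_range_succ]
      nlinarith [sq_nonneg (p n)]
    have hstep : ∑ k ∈ Finset.range (n + 1), p k ^ 2
        ≤ p 0 ^ 2 + γ * ∑ k ∈ Finset.range n, p k ^ 2 + K * (C₁ * B) := by
      have he : ∑ k ∈ Finset.range (n + 1), p k ^ 2
          = (∑ k ∈ Finset.range n, p (k + 1) ^ 2) + p 0 ^ 2 :=
        Finset.sum_range_succ' (fun k => p k ^ 2) n
      rw [he]
      have h5 : ∑ k ∈ Finset.range n, p (k + 1) ^ 2
          ≤ γ * ∑ k ∈ Finset.range n, p k ^ 2 + K * ∑ k ∈ Finset.range n, a k ^ 2 := by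
        rw [Finset.mul_sum, Finset.mul_sum, ← Finset.sum_add_distrib]
        exact Finset.sum_le_sum fun k _ => hrecq k
      have h6 : K * ∑ k ∈ Finset.range n, a k ^ 2 ≤ K * (C₁ * B) :=
        mul_le_mul_of_nonneg_left (hsum_a2 n) hK0.le
      linarith
    have h7 : (1 - γ) * ∑ k ∈ Finset.range n, p k ^ 2 ≤ p 0 ^ 2 + K * (C₁ * B) := by
      linarith
    have h8 : (0:ℝ) < 1 - γ := by linarith
    rw [hS, le_div_iff₀ h8]
    linarith
  -- weighted integral over one block
  have hw : ∀ k : ℕ, (∫ s in g k..g (k + 1), α s * Φ s)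
      ≤ p k * a k + C₂ * a k ^ 2 := by
    intro k
    have hb : ∀ s ∈ Set.Icc (g k) (g (k + 1)), α s * Φ s ≤ α s * (p k + C₂ * a k) := by
      intro s hs
      have hs0 : (0:ℝ) ≤ s := le_trans (hg0 k) hs.1
      have hΦb : Φ s ≤ p k + C₂ * a k := by
        have := hrec1 k s (by rwa [← hgsucc k])
        rw [← hgsucc k] at this
        simpa [hpp, haa] using this
      exact mul_le_mul_of_nonneg_left hΦb (hαpos s hs0).le
    have hmono := intervalIntegral.integral_mono_on (μ := volume) (hgmono k)
      ((hαcont.mul hΦcont).intervalIntegrable _ _)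
      ((hαcont.mul continuous_const).intervalIntegrable _ _) hb
    have heq : (∫ s in g k..g (k + 1), α s * (p k + C₂ * a k))
        = a k * (p k + C₂ * a k) := by
      rw [intervalIntegral.integral_mul_const]
    calc (∫ s in g k..g (k + 1), α s * Φ s)
        ≤ a k * (p k + C₂ * a k) := heq ▸ hmono
      _ ≤ p k * a k + C₂ * a k ^ 2 := le_of_eq (by ring)
  -- total bound
  set T : ℝ := S / 2 + (1 / 2 + C₂) * (C₁ * B) with hT
  have htot : ∀ n : ℕ, (∫ s in (0:ℝ)..g n, α s * Φ s) ≤ T := by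
    intro n
    have hsplit : (∫ s in (g 0)..(g n), α s * Φ s)
        = ∑ k ∈ Finset.range n, ∫ s in g k..g (k + 1), α s * Φ s :=
      (intervalIntegral.sum_integral_adjacent_intervals
        (fun k _ => (hαcont.mul hΦcont).intervalIntegrable _ _)).symm
    have h00 : g 0 = 0 := by simp [hg]
    rw [← h00, hsplit]
    calc ∑ k ∈ Finset.range n, ∫ s in g k..g (k + 1), α s * Φ s
        ≤ ∑ k ∈ Finset.range n, (p k * a k + C₂ * a k ^ 2) :=
          Finset.sum_le_sum fun k _ => hw k
      _ ≤ ∑ k ∈ Finset.range n, (p k ^ 2 / 2 + (1 / 2 + C₂) * a k ^ 2) := by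
          refine Finset.sum_le_sum fun k _ => ?_
          nlinarith [sq_nonneg (p k - a k)]
      _ = (∑ k ∈ Finset.range n, p k ^ 2) / 2
            + (1 / 2 + C₂) * ∑ k ∈ Finset.range n, a k ^ 2 := by
          rw [Finset.sum_add_distrib, Finset.mul_sum, Finset.sum_div]
      _ ≤ T := by
          have h9 := hPsum n
          have h10 := hsum_a2 n
          have h11 : (0:ℝ) < 1 / 2 + C₂ := by linarith
          rw [hT]
          have := mul_le_mul_of_nonneg_left h10 h11.le
          linarith
  -- conclude integrability
  rw [integrableOn_Ici_iff_integrableOn_Ioi]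
  refine integrableOn_Ioi_of_intervalIntegral_norm_bounded T 0
    (fun n : ℕ => ((hαcont.mul hΦcont).integrableOn_Icc).mono_set Set.Ioc_subset_Icc_self)
    (tendsto_natCast_atTop_atTop.atTop_mul_const hC₁) ?_
  filter_upwards with n
  have hnn : (∫ x in (0:ℝ)..g n, ‖α x * Φ x‖) = ∫ x in (0:ℝ)..g n, α x * Φ x := by
    apply intervalIntegral.integral_congr
    intro x hx
    rw [Set.uIcc_of_le (hg0 n)] at hx
    exact norm_of_nonneg (mul_nonneg (hαpos x hx.1).le (hΦnonneg x hx.1))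
  calc (∫ x in (0:ℝ)..(n:ℝ) * C₁, ‖α x * Φ x‖) = ∫ x in (0:ℝ)..g n, α x * Φ x := hnn
    _ ≤ T := htot n
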